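/- Let S be a finite set with |S| = n ≥ 2 and let F be a family of subsets of S with |F| = m that shatters every 2-element subset of S. Then n ≤ binom(m, ⌊m/2⌋). -/

import Mathlib

/-- If `|S| = n ≥ 2` and a family `F` of subsets of `S` with `|F| = m` shatters every
2-element subset of `S`, then `n ≤ binom(m, ⌊m/2⌋)`. -/
theorem card_le_central_binom_of_shatters_pairs {α : Type*} [Fintype α] [DecidableEq α]
    (n m : ℕ) (hn : 2 ≤ n) (hcard : Fintype.card α = n) (F : Finset (Finset α))
    (hm : F.card = m) (hF : ∀ A : Finset α, A.card = 2 → F.Shatters A) :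
    n ≤ m.choose (m / 2) := by
  classical
  have hβ : Fintype.card {E // E ∈ F} = m := by
    rw [Fintype.card_coe, hm]
  let g : α → Finset {E // E ∈ F} :=
    fun x => Finset.univ.filter (fun E => x ∈ (E : Finset α))
  have key : ∀ x y : α, x ≠ y → ∃ E : {E // E ∈ F}, E ∈ g y ∧ E ∉ g x := by
    intro x y hxy
    have hpair : ({x, y} : Finset α).card = 2 := Finset.card_pair hxy
    obtain ⟨u, hu, huy⟩ := hF {x, y} hpair (Finset.singleton_subset_iff.2
      (by simp : y ∈ ({x, y} : Finset α)))
    refine ⟨⟨u, hu⟩, ?_, ?_⟩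
    · simp only [g, Finset.mem_filter, Finset.mem_univ, true_and]
      have : y ∈ ({x, y} : Finset α) ∩ u := by rw [huy]; simp
      exact (Finset.mem_inter.1 this).2
    · simp only [g, Finset.mem_filter, Finset.mem_univ, true_and]
      intro hx
      have : x ∈ ({x, y} : Finset α) ∩ u := Finset.mem_inter.2 ⟨by simp, hx⟩
      rw [huy] at this
      exact hxy (Finset.mem_singleton.1 this)
  have hinj : Function.Injective g := by
    intro x y hxy
    by_contra hne
    obtain ⟨E, hE1, hE2⟩ := key x y hne
    rw [hxy] at hE2
    exact hE2 hE1
  have anti : IsAntichain (· ⊆ ·) ((Finset.univ.image g : Finset (Finset {E // E ∈ F})) :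
      Set (Finset {E // E ∈ F})) := by
    intro A hA B hB hAB hsub
    simp only [Finset.coe_image, Set.mem_image] at hA hB
    obtain ⟨x, -, rfl⟩ := hA
    obtain ⟨y, -, rfl⟩ := hB
    have hxy : x ≠ y := fun h => hAB (by rw [h])
    obtain ⟨E, hE1, hE2⟩ := key y x hxy.symm
    exact hE2 (hsub hE1)
  have := IsAntichain.sperner anti
  rw [hβ] at this
  calc n = (Finset.univ.image g).card := by
        rw [Finset.card_image_of_injective _ hinj, Finset.card_univ, hcard]
    _ ≤ m.choose (m / 2) := this
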